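/- arXiv:2007.02772 — 5 statements merged into one kernel-verified Lean document; each statement's English description precedes it below -/
import Mathlib

section
/- Let U and Z be Banach spaces, let F : U → ℝ be locally Lipschitz at u₀ ∈ U, and let G : U → Z be Fréchet differentiable with G(u₀) = 0. Let φ ∈ U satisfy G'(u₀)φ = 0, and suppose there exist ε₀ > 0, K₁ > 0 and a family {ψ₀(t) : 0 < |t| < ε₀} ⊂ U with ‖ψ₀(t)‖ ≤ K₁ and G(u₀ + tφ + t²ψ₀(t)) = 0 for all 0 < |t| < ε₀. If u₀ is a local minimum of F subject to the constraint G(u) = 0 (i.e., there is δ > 0 with F(u) ≥ F(u₀) for all u ∈ B_δ(u₀) with G(u) = 0), then H_{u₀}(φ) ≥ 0. -/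
open Filter Topology Metric

/-- The generalized directional derivative `H_u(φ)` of `F` at `u` in direction `φ`:
the supremum, over all sequences `uₙ → u` in `U` and `tₙ → 0⁺` in `ℝ`, of
`limsup_{n → ∞} (F (uₙ + tₙ φ) - F uₙ) / tₙ`. -/
noncomputable def genDirDeriv {U : Type*} [NormedAddCommGroup U] [NormedSpace ℝ U]
    (F : U → ℝ) (u : U) (φ : U) : ℝ :=
  sSup { L : ℝ | ∃ (un : ℕ → U) (tn : ℕ → ℝ),
    (∀ n, 0 < tn n) ∧
    Tendsto un atTop (𝓝 u) ∧ Tendsto tn atTop (𝓝 0) ∧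
    L = limsup (fun n => (F (un n + tn n • φ) - F (un n)) / tn n) atTop }

/-- `F` is locally Lipschitz at `u`: there are `r > 0` and `K > 0` with
`|F v - F w| ≤ K ‖v - w‖` for all `v, w` in the ball `B_r(u)`. -/
def LocallyLipschitzAtPt {U : Type*} [NormedAddCommGroup U] (F : U → ℝ) (u : U) : Prop :=
  ∃ r > (0 : ℝ), ∃ K > (0 : ℝ),
    ∀ v ∈ ball u r, ∀ w ∈ ball u r, |F v - F w| ≤ K * ‖v - w‖

/-- if `u₀` is a local minimum of `F` subject to `G u = 0`, `G'(u₀) φ = 0`,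
and there is a uniformly bounded family of corrections `ψ₀(t)` keeping the constraint
satisfied along `u₀ + t φ + t² ψ₀(t)`, then `H_{u₀}(φ) ≥ 0`. -/
theorem genDirDeriv_nonneg_of_localMin_eqConstraint
    {U : Type*} [NormedAddCommGroup U] [NormedSpace ℝ U] [CompleteSpace U]
    {Z : Type*} [NormedAddCommGroup Z] [NormedSpace ℝ Z] [CompleteSpace Z]
    (F : U → ℝ) (u₀ : U) (hF : LocallyLipschitzAtPt F u₀)
    (G : U → Z) (G' : U →L[ℝ] Z) (hG : HasFDerivAt G G' u₀) (hG0 : G u₀ = 0)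
    (φ : U) (hφ : G' φ = 0)
    (ε₀ K₁ : ℝ) (hε₀ : 0 < ε₀) (hK₁ : 0 < K₁) (ψ₀ : ℝ → U)
    (hψ : ∀ t : ℝ, 0 < |t| → |t| < ε₀ →
      ‖ψ₀ t‖ ≤ K₁ ∧ G (u₀ + t • φ + t ^ 2 • ψ₀ t) = 0)
    (hmin : ∃ δ > (0 : ℝ), ∀ u ∈ ball u₀ δ, G u = 0 → F u₀ ≤ F u) :
    0 ≤ genDirDeriv F u₀ φ := by
  obtain ⟨r, hr, K, hK, hLip⟩ := hF
  obtain ⟨δ, hδ, hmin⟩ := hmin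
  -- the set is bounded above by K * ‖φ‖
  set S := { L : ℝ | ∃ (un : ℕ → U) (tn : ℕ → ℝ),
    (∀ n, 0 < tn n) ∧
    Tendsto un atTop (𝓝 u₀) ∧ Tendsto tn atTop (𝓝 0) ∧
    L = limsup (fun n => (F (un n + tn n • φ) - F (un n)) / tn n) atTop } with hS
  have key : ∀ (un : ℕ → U) (tn : ℕ → ℝ), (∀ n, 0 < tn n) →
      Tendsto un atTop (𝓝 u₀) → Tendsto tn atTop (𝓝 0) →
      ∀ᶠ n in atTop, |(F (un n + tn n • φ) - F (un n)) / tn n| ≤ K * ‖φ‖ := by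
    intro un tn htn0 hun htn
    have h1 : ∀ᶠ n in atTop, un n ∈ ball u₀ (r / 2) :=
      hun (ball_mem_nhds u₀ (by linarith))
    have h2 : ∀ᶠ n in atTop, tn n * ‖φ‖ < r / 2 := by
      have : Tendsto (fun n => tn n * ‖φ‖) atTop (𝓝 0) := by
        simpa using htn.mul_const ‖φ‖
      exact this.eventually_lt_const (by linarith)
    filter_upwards [h1, h2] with n hn1 hn2
    have hmem : un n + tn n • φ ∈ ball u₀ r := by
      rw [mem_ball, dist_eq_norm] at hn1 ⊢
      calc ‖un n + tn n • φ - u₀‖ ≤ ‖un n - u₀‖ + ‖tn n • φ‖ := by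
            rw [add_sub_right_comm]; exact norm_add_le _ _
        _ = ‖un n - u₀‖ + tn n * ‖φ‖ := by
            rw [norm_smul, Real.norm_eq_abs, abs_of_pos (htn0 n)]
        _ < r := by linarith
    have hmem' : un n ∈ ball u₀ r := ball_subset_ball (by linarith) hn1
    have := hLip _ hmem _ hmem'
    rw [abs_div, abs_of_pos (htn0 n), div_le_iff₀ (htn0 n)]
    calc |F (un n + tn n • φ) - F (un n)| ≤ K * ‖un n + tn n • φ - un n‖ := this
      _ = K * ‖φ‖ * tn n := by
          rw [add_sub_cancel_left, norm_smul, Real.norm_eq_abs, abs_of_pos (htn0 n)]; ring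
  have hbdd : BddAbove S := by
    refine ⟨K * ‖φ‖, ?_⟩
    rintro L ⟨un, tn, htn0, hun, htn, rfl⟩
    have hev := key un tn htn0 hun htn
    refine limsup_le_of_le ?_ ?_
    · exact (isBoundedUnder_of_eventually_ge
        (hev.mono fun n hn => neg_le_of_abs_le hn)).isCoboundedUnder_le
    · exact hev.mono fun n hn => le_of_abs_le hn
  -- construct the witness sequences
  set c := min ε₀ (min δ r) with hc
  have hc0 : 0 < c := lt_min hε₀ (lt_min hδ hr)
  set t : ℕ → ℝ := fun n => c / (2 * (n + 1)) with ht
  have ht0 : ∀ n, 0 < t n := fun n => by positivity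
  have htlt : ∀ n, t n < ε₀ := by
    intro n
    have h1 : t n ≤ c / 2 := by
      apply div_le_div_of_nonneg_left hc0.le (by norm_num)
      have h0 : (0:ℝ) ≤ n := Nat.cast_nonneg n
      nlinarith
    have : c / 2 < c := by linarith
    exact lt_of_le_of_lt h1 (lt_of_lt_of_le this (min_le_left _ _))
  have httend : Tendsto t atTop (𝓝 0) := by
    have : t = fun n : ℕ => (c / 2) * (1 / (n + 1)) := by
      funext n; rw [ht]; field_simp
    rw [this]
    simpa using tendsto_one_div_add_atTop_nhds_zero_nat.const_mul (c / 2)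
  have hψn : ∀ n, ‖ψ₀ (t n)‖ ≤ K₁ ∧ G (u₀ + t n • φ + (t n) ^ 2 • ψ₀ (t n)) = 0 := by
    intro n
    exact hψ (t n) (by rw [abs_of_pos (ht0 n)]; exact ht0 n)
      (by rw [abs_of_pos (ht0 n)]; exact htlt n)
  set u : ℕ → U := fun n => u₀ + (t n) ^ 2 • ψ₀ (t n) with hu
  have hu_tend : Tendsto u atTop (𝓝 u₀) := by
    have hv : Tendsto (fun n => (t n) ^ 2 • ψ₀ (t n)) atTop (𝓝 (0 : U)) := by
      apply squeeze_zero_norm (a := fun n => K₁ * (t n) ^ 2)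
      · intro n
        rw [norm_smul, Real.norm_eq_abs, abs_of_pos (pow_pos (ht0 n) 2)]
        calc (t n) ^ 2 * ‖ψ₀ (t n)‖ ≤ (t n) ^ 2 * K₁ :=
              mul_le_mul_of_nonneg_left (hψn n).1 (pow_pos (ht0 n) 2).le
          _ = K₁ * (t n) ^ 2 := by ring
      · have := ((httend.mul httend).const_mul K₁)
        simpa [pow_two] using this
    simpa using hv.const_add u₀
  -- eventual smallness
  have hev : ∀ᶠ n in atTop, t n * ‖φ‖ + K₁ * (t n) ^ 2 < min δ r := by
    have h1 : Tendsto (fun n => t n * ‖φ‖ + K₁ * (t n) ^ 2) atTop (𝓝 0) := by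
      have := (httend.mul_const ‖φ‖).add (((httend.mul httend).const_mul K₁))
      simpa [pow_two] using this
    exact h1.eventually_lt_const (lt_min hδ hr)
  -- lower bound eventually
  have hglb : ∀ᶠ n in atTop,
      -(K * K₁) * t n ≤ (F (u n + t n • φ) - F (u n)) / t n := by
    filter_upwards [hev] with n hn
    have hnψ := (hψn n).1
    have htK : 0 ≤ K₁ * (t n) ^ 2 := by positivity
    have htφ : 0 ≤ t n * ‖φ‖ := by positivity
    have hδn : t n * ‖φ‖ + K₁ * (t n) ^ 2 < δ := lt_of_lt_of_le hn (min_le_left _ _)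
    have hrn : t n * ‖φ‖ + K₁ * (t n) ^ 2 < r := lt_of_lt_of_le hn (min_le_right _ _)
    have hnorm : ‖(t n) ^ 2 • ψ₀ (t n)‖ ≤ K₁ * (t n) ^ 2 := by
      rw [norm_smul, Real.norm_eq_abs, abs_of_pos (pow_pos (ht0 n) 2)]
      nlinarith [pow_pos (ht0 n) 2]
    have heq : u n + t n • φ = u₀ + t n • φ + (t n) ^ 2 • ψ₀ (t n) := by
      rw [hu]; exact add_right_comm _ _ _
    -- u n + t n • φ ∈ ball u₀ δ
    have hmemδ : u n + t n • φ ∈ ball u₀ δ := by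
      rw [heq, mem_ball, dist_eq_norm]
      calc ‖u₀ + t n • φ + (t n) ^ 2 • ψ₀ (t n) - u₀‖
          = ‖t n • φ + (t n) ^ 2 • ψ₀ (t n)‖ := by congr 1; abel
        _ ≤ ‖t n • φ‖ + ‖(t n) ^ 2 • ψ₀ (t n)‖ := norm_add_le _ _
        _ ≤ t n * ‖φ‖ + K₁ * (t n) ^ 2 := by
            rw [norm_smul, Real.norm_eq_abs, abs_of_pos (ht0 n)]; linarith
        _ < δ := hδn
    have hFmin : F u₀ ≤ F (u n + t n • φ) := by
      apply hmin _ hmemδ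
      rw [heq]; exact (hψn n).2
    -- |F (u n) - F u₀| ≤ K * (K₁ * t n ^ 2)
    have hmemr : u n ∈ ball u₀ r := by
      rw [hu, mem_ball, dist_eq_norm]
      calc ‖u₀ + (t n) ^ 2 • ψ₀ (t n) - u₀‖ = ‖(t n) ^ 2 • ψ₀ (t n)‖ := by congr 1; abel
        _ ≤ K₁ * (t n) ^ 2 := hnorm
        _ < r := by linarith
    have hu₀mem : u₀ ∈ ball u₀ r := mem_ball_self hr
    have hLipn : |F (u n) - F u₀| ≤ K * (K₁ * (t n) ^ 2) := by
      calc |F (u n) - F u₀| ≤ K * ‖u n - u₀‖ := hLip _ hmemr _ hu₀mem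
        _ ≤ K * (K₁ * (t n) ^ 2) := by
            apply mul_le_mul_of_nonneg_left _ hK.le
            rw [hu]; simpa using hnorm
    rw [le_div_iff₀ (ht0 n)]
    have h1 : F u₀ - F (u n) ≥ -(K * (K₁ * (t n) ^ 2)) := by
      have := abs_le.mp hLipn
      linarith [this.2]
    nlinarith [hFmin, pow_pos (ht0 n) 2]
  -- the limsup is ≥ 0
  set f : ℕ → ℝ := fun n => (F (u n + t n • φ) - F (u n)) / t n with hf
  have hfub : IsBoundedUnder (· ≤ ·) atTop f :=
    isBoundedUnder_of_eventually_le
      ((key u t ht0 hu_tend httend).mono fun n hn => le_of_abs_le hn)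
  have hg_tend : Tendsto (fun n => -(K * K₁) * t n) atTop (𝓝 0) := by
    simpa using httend.const_mul (-(K * K₁))
  have hg_limsup : limsup (fun n => -(K * K₁) * t n) atTop = 0 := hg_tend.limsup_eq
  have hL0 : 0 ≤ limsup f atTop := by
    rw [← hg_limsup]
    exact limsup_le_limsup hglb
      (hg_tend.isBoundedUnder_ge.isCoboundedUnder_le) hfub
  have hmem : limsup f atTop ∈ S := ⟨u, t, ht0, hu_tend, httend, rfl⟩
  exact le_trans hL0 (le_csSup hbdd hmem)
end

section
/- Let U be a Banach space, let F : U → ℝ be locally Lipschitz at u₀ ∈ U, and let V be a closed linear subspace of U such that H_{u₀}(φ) ≥ 0 for all φ ∈ V. Then there exists u* ∈ ∂⁰F(u₀) (i.e., a continuous linear functional u* on U with ⟨φ, u*⟩ ≤ H_{u₀}(φ) for all φ ∈ U) such that ⟨φ, u*⟩ = 0 for all φ ∈ V. -/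
open Filter Topology Metric

section Aux

variable {U : Type*} [NormedAddCommGroup U] [NormedSpace ℝ U]

/-- The set whose supremum defines `genDirDeriv`. -/
def dirSet (F : U → ℝ) (u : U) (φ : U) : Set ℝ :=
  { L : ℝ | ∃ (un : ℕ → U) (tn : ℕ → ℝ),
    (∀ n, 0 < tn n) ∧
    Tendsto un atTop (𝓝 u) ∧ Tendsto tn atTop (𝓝 0) ∧
    L = limsup (fun n => (F (un n + tn n • φ) - F (un n)) / tn n) atTop }

lemma genDirDeriv_eq_sSup (F : U → ℝ) (u φ : U) :
    genDirDeriv F u φ = sSup (dirSet F u φ) := rfl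

lemma dirQuot_abs_bound {F : U → ℝ} {u₀ : U} {r K : ℝ} (hr : 0 < r)
    (hLip : ∀ v ∈ ball u₀ r, ∀ w ∈ ball u₀ r, |F v - F w| ≤ K * ‖v - w‖)
    (φ : U) {un : ℕ → U} {tn : ℕ → ℝ} (htpos : ∀ n, 0 < tn n)
    (hu : Tendsto un atTop (𝓝 u₀)) (ht : Tendsto tn atTop (𝓝 0)) :
    ∀ᶠ n in atTop, |(F (un n + tn n • φ) - F (un n)) / tn n| ≤ K * ‖φ‖ := by
  have hφ1 : (0:ℝ) < ‖φ‖ + 1 := by positivity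
  have hε : (0:ℝ) < r / (2 * (‖φ‖ + 1)) := by positivity
  have h1 : ∀ᶠ n in atTop, un n ∈ ball u₀ (r / 2) :=
    hu.eventually (ball_mem_nhds u₀ (by positivity))
  have h2 : ∀ᶠ n in atTop, tn n ∈ ball (0:ℝ) (r / (2 * (‖φ‖ + 1))) :=
    ht.eventually (ball_mem_nhds 0 hε)
  filter_upwards [h1, h2] with n hn1 hn2
  have htn := htpos n
  rw [mem_ball, dist_eq_norm] at hn1
  rw [mem_ball, Real.dist_eq, sub_zero, abs_of_pos htn] at hn2
  have hsmul : ‖tn n • φ‖ = tn n * ‖φ‖ := by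
    rw [norm_smul, Real.norm_eq_abs, abs_of_pos htn]
  have hsmul_lt : tn n * ‖φ‖ < r / 2 := by
    have h3 : tn n * ‖φ‖ ≤ tn n * (‖φ‖ + 1) := by nlinarith [norm_nonneg φ]
    have h4 : tn n * (‖φ‖ + 1) < (r / (2 * (‖φ‖ + 1))) * (‖φ‖ + 1) := by
      exact mul_lt_mul_of_pos_right hn2 hφ1
    have h5 : (r / (2 * (‖φ‖ + 1))) * (‖φ‖ + 1) = r / 2 := by
      field_simp
    linarith
  have hmem1 : un n ∈ ball u₀ r := by
    rw [mem_ball, dist_eq_norm]; linarith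
  have hmem2 : un n + tn n • φ ∈ ball u₀ r := by
    rw [mem_ball, dist_eq_norm]
    calc ‖un n + tn n • φ - u₀‖ = ‖(un n - u₀) + tn n • φ‖ := by congr 1; abel
      _ ≤ ‖un n - u₀‖ + ‖tn n • φ‖ := norm_add_le _ _
      _ < r / 2 + r / 2 := by rw [hsmul]; exact add_lt_add hn1 hsmul_lt
      _ = r := by ring
  have hdiff : |F (un n + tn n • φ) - F (un n)| ≤ K * (tn n * ‖φ‖) := by
    have := hLip _ hmem2 _ hmem1
    simpa [hsmul] using this
  rw [abs_div, abs_of_pos htn, div_le_iff₀ htn]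
  calc |F (un n + tn n • φ) - F (un n)| ≤ K * (tn n * ‖φ‖) := hdiff
    _ = K * ‖φ‖ * tn n := by ring

lemma dirQuot_boundedUnder_le {F : U → ℝ} {u₀ : U} {r K : ℝ} (hr : 0 < r)
    (hLip : ∀ v ∈ ball u₀ r, ∀ w ∈ ball u₀ r, |F v - F w| ≤ K * ‖v - w‖)
    (φ : U) {un : ℕ → U} {tn : ℕ → ℝ} (htpos : ∀ n, 0 < tn n)
    (hu : Tendsto un atTop (𝓝 u₀)) (ht : Tendsto tn atTop (𝓝 0)) :
    IsBoundedUnder (· ≤ ·) atTop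
      (fun n => (F (un n + tn n • φ) - F (un n)) / tn n) :=
  isBoundedUnder_of_eventually_le (a := K * ‖φ‖) <|
    (dirQuot_abs_bound hr hLip φ htpos hu ht).mono fun n h => (le_abs_self _).trans h

lemma dirQuot_boundedUnder_ge {F : U → ℝ} {u₀ : U} {r K : ℝ} (hr : 0 < r)
    (hLip : ∀ v ∈ ball u₀ r, ∀ w ∈ ball u₀ r, |F v - F w| ≤ K * ‖v - w‖)
    (φ : U) {un : ℕ → U} {tn : ℕ → ℝ} (htpos : ∀ n, 0 < tn n)
    (hu : Tendsto un atTop (𝓝 u₀)) (ht : Tendsto tn atTop (𝓝 0)) :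
    IsBoundedUnder (· ≥ ·) atTop
      (fun n => (F (un n + tn n • φ) - F (un n)) / tn n) :=
  isBoundedUnder_of_eventually_ge (a := -(K * ‖φ‖)) <|
    (dirQuot_abs_bound hr hLip φ htpos hu ht).mono fun n h => neg_le_of_abs_le h

lemma mem_dirSet_le {F : U → ℝ} {u₀ : U} {r K : ℝ} (hr : 0 < r)
    (hLip : ∀ v ∈ ball u₀ r, ∀ w ∈ ball u₀ r, |F v - F w| ≤ K * ‖v - w‖)
    {φ : U} {L : ℝ} (hmem : L ∈ dirSet F u₀ φ) : L ≤ K * ‖φ‖ := by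
  obtain ⟨un, tn, htpos, hu, ht, rfl⟩ := hmem
  refine limsup_le_of_le
    ((dirQuot_boundedUnder_ge hr hLip φ htpos hu ht).isCoboundedUnder_le) ?_
  exact (dirQuot_abs_bound hr hLip φ htpos hu ht).mono fun n h =>
    (le_abs_self _).trans h

lemma dirSet_nonempty (F : U → ℝ) (u₀ φ : U) : (dirSet F u₀ φ).Nonempty := by
  refine ⟨_, fun _ => u₀, fun n => 1 / (n + 1 : ℝ), fun n => by positivity,
    tendsto_const_nhds, tendsto_one_div_add_atTop_nhds_zero_nat, rfl⟩

lemma dirSet_bddAbove {F : U → ℝ} {u₀ : U} {r K : ℝ} (hr : 0 < r)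
    (hLip : ∀ v ∈ ball u₀ r, ∀ w ∈ ball u₀ r, |F v - F w| ≤ K * ‖v - w‖)
    (φ : U) : BddAbove (dirSet F u₀ φ) :=
  ⟨K * ‖φ‖, fun _ h => mem_dirSet_le hr hLip h⟩

lemma smul_mem_dirSet {F : U → ℝ} {u₀ : U} {r K : ℝ} (hr : 0 < r)
    (hLip : ∀ v ∈ ball u₀ r, ∀ w ∈ ball u₀ r, |F v - F w| ≤ K * ‖v - w‖)
    {φ : U} {c : ℝ} (hc : 0 < c) {L : ℝ} (hmem : L ∈ dirSet F u₀ φ) :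
    c * L ∈ dirSet F u₀ (c • φ) := by
  obtain ⟨un, tn, htpos, hu, ht, rfl⟩ := hmem
  refine ⟨un, fun n => tn n / c, fun n => div_pos (htpos n) hc, hu,
    by simpa using ht.div_const c, ?_⟩
  have hkey : (fun n => (F (un n + (tn n / c) • (c • φ)) - F (un n)) / (tn n / c))
      = (fun x => c * x) ∘ (fun n => (F (un n + tn n • φ) - F (un n)) / tn n) := by
    funext n
    have h1 : (tn n / c) • (c • φ) = tn n • φ := by
      rw [smul_smul, div_mul_cancel₀ _ hc.ne']
    rw [h1, Function.comp_apply, div_div_eq_mul_div, mul_comm, mul_div_assoc]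
  rw [hkey]
  exact ((monotone_mul_left_of_nonneg hc.le).map_limsup_of_continuousAt _
    ((continuous_const.mul continuous_id).continuousAt)
    (dirQuot_boundedUnder_le hr hLip φ htpos hu ht)
    ((dirQuot_boundedUnder_ge hr hLip φ htpos hu ht).isCoboundedUnder_le))

lemma mem_dirSet_add_le {F : U → ℝ} {u₀ : U} {r K : ℝ} (hr : 0 < r)
    (hLip : ∀ v ∈ ball u₀ r, ∀ w ∈ ball u₀ r, |F v - F w| ≤ K * ‖v - w‖)
    {φ ψ : U} {L : ℝ} (hmem : L ∈ dirSet F u₀ (φ + ψ)) :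
    L ≤ sSup (dirSet F u₀ φ) + sSup (dirSet F u₀ ψ) := by
  obtain ⟨un, tn, htpos, hu, ht, rfl⟩ := hmem
  set vn : ℕ → U := fun n => un n + tn n • ψ with hvn
  have hv : Tendsto vn atTop (𝓝 u₀) := by
    have : Tendsto (fun n => tn n • ψ) atTop (𝓝 ((0:ℝ) • ψ)) := ht.smul_const ψ
    simpa using hu.add this
  set A : ℕ → ℝ := fun n => (F (vn n + tn n • φ) - F (vn n)) / tn n with hA
  set B : ℕ → ℝ := fun n => (F (un n + tn n • ψ) - F (un n)) / tn n with hB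
  have hAB : (fun n => (F (un n + tn n • (φ + ψ)) - F (un n)) / tn n) = A + B := by
    funext n
    have h1 : un n + tn n • (φ + ψ) = vn n + tn n • φ := by
      rw [hvn]; simp only [smul_add]; abel
    simp only [Pi.add_apply, hA, hB, hvn, h1]
    rw [← add_div, sub_add_sub_cancel]
  rw [hAB]
  have hAmem : limsup A atTop ∈ dirSet F u₀ φ :=
    ⟨vn, tn, htpos, hv, ht, rfl⟩
  have hBmem : limsup B atTop ∈ dirSet F u₀ ψ :=
    ⟨un, tn, htpos, hu, ht, rfl⟩
  calc limsup (A + B) atTop ≤ limsup A atTop + limsup B atTop :=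
        limsup_add_le (dirQuot_boundedUnder_ge hr hLip φ htpos hv ht)
          (dirQuot_boundedUnder_le hr hLip φ htpos hv ht)
          ((dirQuot_boundedUnder_ge hr hLip ψ htpos hu ht).isCoboundedUnder_le)
          (dirQuot_boundedUnder_le hr hLip ψ htpos hu ht)
    _ ≤ sSup (dirSet F u₀ φ) + sSup (dirSet F u₀ ψ) :=
        add_le_add (le_csSup (dirSet_bddAbove hr hLip φ) hAmem)
          (le_csSup (dirSet_bddAbove hr hLip ψ) hBmem)

end Aux

/-- if `H_{u₀} ≥ 0` on a closed subspace `V`, then there is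
`u* ∈ ∂⁰F(u₀)` (i.e. `⟨φ, u*⟩ ≤ H_{u₀}(φ)` for all `φ`) vanishing on `V`. -/
theorem exists_subgradient_vanishing_on_subspace
    {U : Type*} [NormedAddCommGroup U] [NormedSpace ℝ U] [CompleteSpace U]
    (F : U → ℝ) (u₀ : U) (hF : LocallyLipschitzAtPt F u₀)
    (V : Submodule ℝ U) (hV : IsClosed (V : Set U))
    (hpos : ∀ φ ∈ V, 0 ≤ genDirDeriv F u₀ φ) :
    ∃ ustar : U →L[ℝ] ℝ,
      (∀ φ : U, ustar φ ≤ genDirDeriv F u₀ φ) ∧ ∀ φ ∈ V, ustar φ = 0 := by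
  obtain ⟨r, hr, K, hK, hLip⟩ := hF
  set N : U → ℝ := genDirDeriv F u₀ with hN
  have hNle : ∀ φ : U, N φ ≤ K * ‖φ‖ := fun φ => by
    rw [hN, genDirDeriv_eq_sSup]
    exact csSup_le (dirSet_nonempty F u₀ φ) fun L hL => mem_dirSet_le hr hLip hL
  have N_hom : ∀ c : ℝ, 0 < c → ∀ x : U, N (c • x) = c * N x := by
    intro c hc x
    rw [hN, genDirDeriv_eq_sSup, genDirDeriv_eq_sSup]
    apply le_antisymm
    · refine csSup_le (dirSet_nonempty F u₀ _) fun L hL => ?_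
      have h1 : c⁻¹ * L ∈ dirSet F u₀ (c⁻¹ • (c • x)) :=
        smul_mem_dirSet hr hLip (inv_pos.mpr hc) hL
      rw [smul_smul, inv_mul_cancel₀ hc.ne', one_smul] at h1
      have h2 : c⁻¹ * L ≤ sSup (dirSet F u₀ x) :=
        le_csSup (dirSet_bddAbove hr hLip x) h1
      calc L = c * (c⁻¹ * L) := by field_simp
        _ ≤ c * sSup (dirSet F u₀ x) := mul_le_mul_of_nonneg_left h2 hc.le
    · rw [mul_comm, ← le_div_iff₀ hc]
      refine csSup_le (dirSet_nonempty F u₀ x) fun L hL => ?_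
      have h1 : c * L ∈ dirSet F u₀ (c • x) := smul_mem_dirSet hr hLip hc hL
      have h2 : c * L ≤ sSup (dirSet F u₀ (c • x)) :=
        le_csSup (dirSet_bddAbove hr hLip _) h1
      rw [le_div_iff₀ hc, mul_comm]
      exact h2
  have N_add : ∀ x y : U, N (x + y) ≤ N x + N y := by
    intro x y
    rw [hN, genDirDeriv_eq_sSup, genDirDeriv_eq_sSup, genDirDeriv_eq_sSup]
    exact csSup_le (dirSet_nonempty F u₀ _) fun L hL =>
      mem_dirSet_add_le hr hLip hL
  set f : U →ₗ.[ℝ] ℝ := ⟨V, 0⟩ with hf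
  have hfle : ∀ x : f.domain, f x ≤ N x := by
    intro x
    have : f x = 0 := rfl
    rw [this]
    exact hpos x x.2
  obtain ⟨g, hg0, hgle⟩ := exists_extension_of_le_sublinear f N N_hom N_add hfle
  have hgbound : ∀ φ : U, ‖g φ‖ ≤ K * ‖φ‖ := by
    intro φ
    rw [Real.norm_eq_abs, abs_le]
    constructor
    · have h1 : g (-φ) ≤ N (-φ) := hgle (-φ)
      rw [map_neg] at h1
      have h2 : N (-φ) ≤ K * ‖-φ‖ := hNle (-φ)
      rw [norm_neg] at h2
      linarith
    · exact (hgle φ).trans (hNle φ)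
  refine ⟨g.mkContinuous K hgbound, fun φ => ?_, fun φ hφ => ?_⟩
  · exact hgle φ
  · exact hg0 ⟨φ, hφ⟩
end

section
/- (Lagrange multipliers for equality constraints in non-smooth optimization) Let U and Z be Banach spaces, let F : U → ℝ be locally Lipschitz at u₀ ∈ U, and let G : U → Z be a Fréchet differentiable map such that G'(u₀) maps U onto Z. Assume there exist α > 0 and K > 0 such that ‖G'(u₀ + φ) − G'(u₀)‖ ≤ K‖φ‖ whenever ‖φ‖ < α. If u₀ is a local minimum of F subject to the constraint G(u) = 0 (i.e., G(u₀) = 0 and there is δ > 0 with F(u) ≥ F(u₀) for all u ∈ B_δ(u₀) with G(u) = 0), then there exist u* ∈ ∂⁰F(u₀) and z₀* ∈ Z* such that u* + (G'(u₀))*(z₀*) = 0, equivalently ⟨φ, u*⟩ + ⟨G'(u₀)φ, z₀*⟩ = 0 for all φ ∈ U. -/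
open Filter Topology Metric

namespace NSLag

variable {U : Type*} [NormedAddCommGroup U] [NormedSpace ℝ U]

def gdSet (F : U → ℝ) (u φ : U) : Set ℝ :=
  { L : ℝ | ∃ (un : ℕ → U) (tn : ℕ → ℝ),
    (∀ n, 0 < tn n) ∧
    Tendsto un atTop (𝓝 u) ∧ Tendsto tn atTop (𝓝 0) ∧
    L = limsup (fun n => (F (un n + tn n • φ) - F (un n)) / tn n) atTop }

lemma genDirDeriv_eq (F : U → ℝ) (u φ : U) : genDirDeriv F u φ = sSup (gdSet F u φ) := rfl

variable {F : U → ℝ} {u₀ : U} {r K : ℝ}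

/-- eventual bound on difference quotients -/
lemma eventually_bound (hr : 0 < r)
    (hK : ∀ v ∈ ball u₀ r, ∀ w ∈ ball u₀ r, |F v - F w| ≤ K * ‖v - w‖)
    (φ : U) {un : ℕ → U} {tn : ℕ → ℝ} (htp : ∀ n, 0 < tn n)
    (hu : Tendsto un atTop (𝓝 u₀)) (ht : Tendsto tn atTop (𝓝 0)) :
    ∀ᶠ n in atTop, |(F (un n + tn n • φ) - F (un n)) / tn n| ≤ K * ‖φ‖ := by
  have h1 : ∀ᶠ n in atTop, un n ∈ ball u₀ (r/2) :=
    hu (ball_mem_nhds u₀ (by linarith))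
  have h2 : ∀ᶠ n in atTop, tn n < r / (2 * (‖φ‖ + 1)) :=
    ht.eventually_lt_const (by positivity)
  filter_upwards [h1, h2] with n h1 h2
  have hφ1 : (0:ℝ) < ‖φ‖ + 1 := by positivity
  have htn := htp n
  have hx : un n + tn n • φ ∈ ball u₀ r := by
    rw [mem_ball, dist_eq_norm] at h1 ⊢
    calc ‖un n + tn n • φ - u₀‖ ≤ ‖un n - u₀‖ + ‖tn n • φ‖ := by
          rw [add_sub_right_comm]; exact norm_add_le _ _
      _ < r/2 + r/2 := by
          refine add_lt_add_of_lt_of_le h1 ?_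
          rw [norm_smul, Real.norm_eq_abs, abs_of_pos htn]
          calc tn n * ‖φ‖ ≤ tn n * (‖φ‖ + 1) := by nlinarith
            _ ≤ r / (2 * (‖φ‖ + 1)) * (‖φ‖ + 1) := by nlinarith
            _ = r/2 := by field_simp
      _ = r := by ring
  have hy : un n ∈ ball u₀ r := ball_subset_ball (by linarith) h1
  have := hK _ hx _ hy
  rw [abs_div, abs_of_pos htn, div_le_iff₀ htn]
  calc |F (un n + tn n • φ) - F (un n)| ≤ K * ‖un n + tn n • φ - un n‖ := this
    _ = K * ‖φ‖ * tn n := by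
        rw [add_sub_cancel_left, norm_smul, Real.norm_eq_abs, abs_of_pos htn]; ring

lemma mem0 (F : U → ℝ) (u₀ φ : U) :
    limsup (fun n : ℕ => (F (u₀ + (1/((n:ℝ)+1)) • φ) - F u₀) / (1/((n:ℝ)+1))) atTop
      ∈ gdSet F u₀ φ :=
  ⟨fun _ => u₀, fun n : ℕ => 1/((n:ℝ)+1), fun n => by positivity, tendsto_const_nhds,
    tendsto_one_div_add_atTop_nhds_zero_nat, rfl⟩

lemma gdSet_nonempty (F : U → ℝ) (u₀ φ : U) : (gdSet F u₀ φ).Nonempty := ⟨_, mem0 F u₀ φ⟩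

lemma mem_le (hr : 0 < r)
    (hK : ∀ v ∈ ball u₀ r, ∀ w ∈ ball u₀ r, |F v - F w| ≤ K * ‖v - w‖)
    (φ : U) {L : ℝ} (hL : L ∈ gdSet F u₀ φ) : L ≤ K * ‖φ‖ := by
  obtain ⟨un, tn, htp, hu, ht, rfl⟩ := hL
  have hb := eventually_bound hr hK φ htp hu ht
  refine limsup_le_of_le ?_ (hb.mono fun n h => (abs_le.1 h).2)
  exact IsBoundedUnder.isCoboundedUnder_le
    ⟨-(K * ‖φ‖), eventually_map.2 (hb.mono fun n h => (abs_le.1 h).1)⟩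

lemma gdSet_bddAbove (hr : 0 < r)
    (hK : ∀ v ∈ ball u₀ r, ∀ w ∈ ball u₀ r, |F v - F w| ≤ K * ‖v - w‖)
    (φ : U) : BddAbove (gdSet F u₀ φ) :=
  ⟨K * ‖φ‖, fun _ hL => mem_le hr hK φ hL⟩

lemma le_H (hr : 0 < r)
    (hK : ∀ v ∈ ball u₀ r, ∀ w ∈ ball u₀ r, |F v - F w| ≤ K * ‖v - w‖)
    (φ : U) {L : ℝ} (hL : L ∈ gdSet F u₀ φ) : L ≤ genDirDeriv F u₀ φ :=
  le_csSup (gdSet_bddAbove hr hK φ) hL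

lemma H_le_norm (hr : 0 < r)
    (hK : ∀ v ∈ ball u₀ r, ∀ w ∈ ball u₀ r, |F v - F w| ≤ K * ‖v - w‖)
    (φ : U) : genDirDeriv F u₀ φ ≤ K * ‖φ‖ :=
  csSup_le (gdSet_nonempty F u₀ φ) (fun _ hL => mem_le hr hK φ hL)

lemma H_add (hr : 0 < r)
    (hK : ∀ v ∈ ball u₀ r, ∀ w ∈ ball u₀ r, |F v - F w| ≤ K * ‖v - w‖)
    (φ ψ : U) :
    genDirDeriv F u₀ (φ + ψ) ≤ genDirDeriv F u₀ φ + genDirDeriv F u₀ ψ := by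
  refine csSup_le (gdSet_nonempty F u₀ _) ?_
  rintro L ⟨un, tn, htp, hu, ht, rfl⟩
  set vn : ℕ → U := fun n => un n + tn n • ψ with hvn
  have hv : Tendsto vn atTop (𝓝 u₀) := by
    have : Tendsto (fun n => tn n • ψ) atTop (𝓝 ((0:ℝ) • ψ)) := ht.smul_const ψ
    rw [zero_smul] at this
    simpa using hu.add this
  set bf : ℕ → ℝ := fun n => (F (vn n + tn n • φ) - F (vn n)) / tn n with hbf
  set cf : ℕ → ℝ := fun n => (F (un n + tn n • ψ) - F (un n)) / tn n with hcf
  have keyeq : (fun n => (F (un n + tn n • (φ + ψ)) - F (un n)) / tn n) = bf + cf := by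
    funext n
    have hvφ : un n + tn n • (φ + ψ) = vn n + tn n • φ := by
      simp only [hvn, smul_add]; abel
    show _ = bf n + cf n
    rw [hbf, hcf, hvφ, ← add_div]
    congr 1
    simp only [hvn]
    ring
  have hb := eventually_bound hr hK φ htp hv ht
  have hc := eventually_bound hr hK ψ htp hu ht
  rw [keyeq]
  have h1 : IsBoundedUnder (· ≥ ·) atTop bf :=
    ⟨-(K * ‖φ‖), eventually_map.2 (hb.mono fun n h => (abs_le.1 h).1)⟩
  have h2 : IsBoundedUnder (· ≤ ·) atTop bf :=
    ⟨K * ‖φ‖, eventually_map.2 (hb.mono fun n h => (abs_le.1 h).2)⟩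
  have h4 : IsBoundedUnder (· ≤ ·) atTop cf :=
    ⟨K * ‖ψ‖, eventually_map.2 (hc.mono fun n h => (abs_le.1 h).2)⟩
  have h3 : IsCoboundedUnder (· ≤ ·) atTop cf :=
    IsBoundedUnder.isCoboundedUnder_le
      ⟨-(K * ‖ψ‖), eventually_map.2 (hc.mono fun n h => (abs_le.1 h).1)⟩
  refine (limsup_add_le h1 h2 h3 h4).trans (add_le_add ?_ ?_)
  · exact le_H hr hK φ ⟨vn, tn, htp, hv, ht, rfl⟩
  · exact le_H hr hK ψ ⟨un, tn, htp, hu, ht, rfl⟩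

lemma H_smul_le (hr : 0 < r)
    (hK : ∀ v ∈ ball u₀ r, ∀ w ∈ ball u₀ r, |F v - F w| ≤ K * ‖v - w‖)
    {c : ℝ} (hc : 0 < c) (φ : U) :
    genDirDeriv F u₀ (c • φ) ≤ c * genDirDeriv F u₀ φ := by
  refine csSup_le (gdSet_nonempty F u₀ _) ?_
  rintro L ⟨un, tn, htp, hu, ht, rfl⟩
  set sn : ℕ → ℝ := fun n => c * tn n with hsn
  have hsp : ∀ n, 0 < sn n := fun n => mul_pos hc (htp n)
  have hs : Tendsto sn atTop (𝓝 0) := by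
    have := ht.const_mul c; simpa using this
  set bf : ℕ → ℝ := fun n => (F (un n + sn n • φ) - F (un n)) / sn n with hbf
  have keyeq : (fun n => (F (un n + tn n • (c • φ)) - F (un n)) / tn n)
      = (fun x => c * x) ∘ bf := by
    funext n
    have h1 : tn n • (c • φ) = sn n • φ := by rw [smul_smul, hsn]; ring_nf
    show _ = c * bf n
    rw [hbf, h1]
    have := (htp n).ne'
    field_simp
    have hsn1 : tn n * c * (sn n)⁻¹ = 1 := by
      simp only [hsn]; rw [mul_comm (tn n) c]; exact mul_inv_cancel₀ (mul_ne_zero hc.ne' this)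
    linear_combination (F (un n) - F (un n + sn n • φ)) * hsn1
  have hb := eventually_bound hr hK φ hsp hu hs
  have h2 : IsBoundedUnder (· ≤ ·) atTop bf :=
    ⟨K * ‖φ‖, eventually_map.2 (hb.mono fun n h => (abs_le.1 h).2)⟩
  have h3 : IsCoboundedUnder (· ≤ ·) atTop bf :=
    IsBoundedUnder.isCoboundedUnder_le
      ⟨-(K * ‖φ‖), eventually_map.2 (hb.mono fun n h => (abs_le.1 h).1)⟩
  rw [keyeq, ← Monotone.map_limsup_of_continuousAt (f := fun x => c * x)
      (fun x y h => mul_le_mul_of_nonneg_left h hc.le) bf ((continuous_const.mul continuous_id).continuousAt) h2 h3]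
  exact mul_le_mul_of_nonneg_left (le_H hr hK φ ⟨un, sn, hsp, hu, hs, rfl⟩) hc.le

lemma H_smul (hr : 0 < r)
    (hK : ∀ v ∈ ball u₀ r, ∀ w ∈ ball u₀ r, |F v - F w| ≤ K * ‖v - w‖)
    {c : ℝ} (hc : 0 < c) (φ : U) :
    genDirDeriv F u₀ (c • φ) = c * genDirDeriv F u₀ φ := by
  refine le_antisymm (H_smul_le hr hK hc φ) ?_
  have h := H_smul_le hr hK (inv_pos.2 hc) (c • φ)
  rw [smul_smul, inv_mul_cancel₀ hc.ne', one_smul] at h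
  calc c * genDirDeriv F u₀ φ ≤ c * (c⁻¹ * genDirDeriv F u₀ (c • φ)) :=
        mul_le_mul_of_nonneg_left h hc.le
    _ = genDirDeriv F u₀ (c • φ) := by field_simp

end NSLag

open NSLag

/-- Lagrange multipliers for equality constraints, non-smooth case:
if `u₀` is a local minimum of the locally Lipschitz `F` subject to `G u = 0`, where `G` is
Fréchet differentiable, `G'(u₀)` is onto, and `G'` is Lipschitz near `u₀`, then there exist
`u* ∈ ∂⁰F(u₀)` and `z₀* ∈ Z*` with `u* + (G'(u₀))* z₀* = 0`, i.e.
`⟨φ, u*⟩ + ⟨G'(u₀) φ, z₀*⟩ = 0` for all `φ ∈ U`. -/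
theorem lagrange_multiplier_eq_nonsmooth
    {U : Type*} [NormedAddCommGroup U] [NormedSpace ℝ U] [CompleteSpace U]
    {Z : Type*} [NormedAddCommGroup Z] [NormedSpace ℝ Z] [CompleteSpace Z]
    (F : U → ℝ) (u₀ : U) (hF : LocallyLipschitzAtPt F u₀)
    (G : U → Z) (G' : U → U →L[ℝ] Z) (hG : ∀ u : U, HasFDerivAt G (G' u) u)
    (hsurj : Function.Surjective (G' u₀))
    (hLip : ∃ α > (0 : ℝ), ∃ K > (0 : ℝ),
      ∀ φ : U, ‖φ‖ < α → ‖G' (u₀ + φ) - G' u₀‖ ≤ K * ‖φ‖)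
    (hG0 : G u₀ = 0)
    (hmin : ∃ δ > (0 : ℝ), ∀ u ∈ ball u₀ δ, G u = 0 → F u₀ ≤ F u) :
    ∃ ustar : U →L[ℝ] ℝ, (∀ φ : U, ustar φ ≤ genDirDeriv F u₀ φ) ∧
      ∃ z₀star : Z →L[ℝ] ℝ,
        ustar + z₀star.comp (G' u₀) = 0 ∧
        ∀ φ : U, ustar φ + z₀star (G' u₀ φ) = 0 := by
  classical
  obtain ⟨r, hr, K, hK0, hK⟩ := hF
  obtain ⟨α, hα, KG, hKG0, hKG⟩ := hLip
  obtain ⟨δ, hδ, hmin'⟩ := hmin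
  set M : U →L[ℝ] Z := G' u₀ with hM
  -- mean value estimate
  have mvt : ∀ (ρ' : ℝ), ρ' < α → ∀ x ∈ closedBall u₀ ρ', ∀ y ∈ closedBall u₀ ρ',
      ‖G x - G y - M (x - y)‖ ≤ KG * ρ' * ‖x - y‖ := by
    intro ρ' hρ'α x hx y hy
    set g : U → Z := fun x => G x - M x with hg
    have hder : ∀ z ∈ closedBall u₀ ρ', HasFDerivWithinAt g (G' z - M) (closedBall u₀ ρ') z :=
      fun z _ => ((hG z).sub M.hasFDerivAt).hasFDerivWithinAt
    have hbound : ∀ z ∈ closedBall u₀ ρ', ‖G' z - M‖ ≤ KG * ρ' := by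
      intro z hz
      have h1 : ‖z - u₀‖ ≤ ρ' := by rwa [mem_closedBall, dist_eq_norm] at hz
      have h2 := hKG (z - u₀) (lt_of_le_of_lt h1 hρ'α)
      have h3 : u₀ + (z - u₀) = z := by abel
      rw [h3] at h2
      exact h2.trans (by nlinarith [norm_nonneg (z - u₀)])
    have hmv := (convex_closedBall u₀ ρ').norm_image_sub_le_of_norm_hasFDerivWithin_le
      hder hbound hy hx
    have heq : g x - g y = G x - G y - M (x - y) := by
      simp only [hg, map_sub]; abel
    rwa [heq] at hmv
  have hrange : LinearMap.range (M : U →ₗ[ℝ] Z) = ⊤ := (LinearMap.range_eq_top (f := (M : U →ₗ[ℝ] Z))).2 hsurj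
  set fsym := M.nonlinearRightInverseOfSurjective hrange with hfsym
  have hN : (0:ℝ) < (fsym.nnnorm : ℝ) := by
    exact_mod_cast M.nonlinearRightInverseOfSurjective_nnnorm_pos hrange
  set Ninv : ℝ := ((fsym.nnnorm : ℝ))⁻¹ with hNinvdef
  have hNinv : 0 < Ninv := inv_pos.2 hN
  set ρ : ℝ := min (α/2) (Ninv/(2*KG)) with hρdef
  have hρ0 : 0 < ρ := lt_min (by linarith) (by positivity)
  have hρα : ρ < α := lt_of_le_of_lt (min_le_left _ _) (by linarith)
  set cρ : ℝ := KG * ρ with hcρ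
  have hc0 : 0 ≤ cρ := by positivity
  have hgap : 0 < Ninv - cρ := by
    have h1 : ρ ≤ Ninv/(2*KG) := min_le_right _ _
    have h2 : cρ ≤ Ninv/2 := by
      rw [hcρ]
      calc KG * ρ ≤ KG * (Ninv/(2*KG)) := mul_le_mul_of_nonneg_left h1 hKG0.le
        _ = Ninv/2 := by field_simp
    linarith
  have happrox : ∀ x ∈ closedBall u₀ ρ, ∀ y ∈ closedBall u₀ ρ,
      ‖G x - G y - M (x - y)‖ ≤ cρ * ‖x - y‖ := fun x hx y hy => mvt ρ hρα x hx y hy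
  -- solving G w = 0 near points where ‖G v‖ is small
  have existsW : ∀ (v : U) (ε : ℝ), 0 ≤ ε → closedBall v ε ⊆ closedBall u₀ ρ →
      ‖G v‖ ≤ (Ninv - cρ) * ε → ∃ w, G w = 0 ∧ ‖w - v‖ ≤ ε := by
    intro v ε hε0 hsub hGv
    have happ : ApproximatesLinearOn G M (closedBall v ε) ⟨cρ, hc0⟩ :=
      fun x hx y hy => happrox x (hsub hx) y (hsub hy)
    have hsurjOn := happ.surjOn_closedBall_of_nonlinearRightInverse fsym hε0 (subset_refl _)
    have h0mem : (0:Z) ∈ closedBall (G v) (((fsym.nnnorm : ℝ)⁻¹ - cρ) * ε) := by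
      rw [mem_closedBall, dist_zero_left]
      exact hGv
    obtain ⟨w, hw, hGw⟩ := hsurjOn h0mem
    exact ⟨w, hGw, by rwa [mem_closedBall, dist_eq_norm] at hw⟩
  -- the key positivity on the kernel
  have key : ∀ φ : U, M φ = 0 → 0 ≤ genDirDeriv F u₀ φ := by
    intro φ hφ
    have smallG : ∀ t : ℝ, 0 < t → t * ‖φ‖ < α → ‖G (u₀ + t • φ)‖ ≤ KG * ‖φ‖^2 * t^2 := by
      intro t ht0 htα
      have hnn : 0 ≤ t * ‖φ‖ := by positivity
      have hv : u₀ + t • φ ∈ closedBall u₀ (t * ‖φ‖) := by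
        rw [mem_closedBall, dist_eq_norm, add_sub_cancel_left, norm_smul,
          Real.norm_eq_abs, abs_of_pos ht0]
      have h1 := mvt (t * ‖φ‖) htα (u₀ + t • φ) hv u₀ (mem_closedBall_self hnn)
      rw [add_sub_cancel_left] at h1
      rw [map_smul, hφ, smul_zero, sub_zero, hG0, sub_zero] at h1
      rw [norm_smul, Real.norm_eq_abs, abs_of_pos ht0] at h1
      calc ‖G (u₀ + t • φ)‖ ≤ KG * (t * ‖φ‖) * (t * ‖φ‖) := h1
        _ = KG * ‖φ‖^2 * t^2 := by ring
    set tns : ℕ → ℝ := fun n => 1/((n:ℝ)+1) with htns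
    have htp : ∀ n, 0 < tns n := fun n => by positivity
    have ht : Tendsto tns atTop (𝓝 0) := tendsto_one_div_add_atTop_nhds_zero_nat
    set C : ℝ := KG * ‖φ‖^2 / (Ninv - cρ) with hC
    have hC0 : 0 ≤ C := div_nonneg (by positivity) hgap.le
    set P : ℕ → Prop := fun n =>
      ∃ w, G w = 0 ∧ ‖w - (u₀ + tns n • φ)‖ ≤ C * tns n^2 with hP
    have htend : Tendsto (fun n => tns n * ‖φ‖ + C * tns n ^ 2) atTop (𝓝 0) := by
      have h1 := ht.mul_const ‖φ‖
      rw [zero_mul] at h1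
      have h2 : Tendsto (fun n => C * tns n ^ 2) atTop (𝓝 0) := by
        have h4 := (ht.mul ht).const_mul C
        rw [mul_zero, mul_zero] at h4
        simp only [pow_two]
        exact h4
      have h3 := h1.add h2
      rwa [add_zero] at h3
    have hsmall : ∀ᶠ n in atTop, tns n * ‖φ‖ + C * tns n ^ 2 < min ρ (min α δ) :=
      htend.eventually_lt_const (lt_min hρ0 (lt_min hα hδ))
    have hex : ∀ᶠ n in atTop, P n := by
      filter_upwards [hsmall] with n hn
      have ht0 := htp n
      have hεnn : 0 ≤ C * tns n^2 := by positivity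
      have hφnn : 0 ≤ tns n * ‖φ‖ := by positivity
      have hρle : min ρ (min α δ) ≤ ρ := min_le_left _ _
      have hαle : min ρ (min α δ) ≤ α := le_trans (min_le_right _ _) (min_le_left _ _)
      have htα : tns n * ‖φ‖ < α := by linarith
      have hGv := smallG (tns n) ht0 htα
      have hsub : closedBall (u₀ + tns n • φ) (C * tns n^2) ⊆ closedBall u₀ ρ := by
        intro w hw
        rw [mem_closedBall] at hw ⊢
        calc dist w u₀ ≤ dist w (u₀ + tns n • φ) + dist (u₀ + tns n • φ) u₀ :=
              dist_triangle _ _ _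
          _ ≤ C * tns n^2 + tns n * ‖φ‖ := by
              refine add_le_add hw ?_
              rw [dist_eq_norm, add_sub_cancel_left, norm_smul, Real.norm_eq_abs,
                abs_of_pos ht0]
          _ ≤ ρ := by linarith
      have hGv2 : ‖G (u₀ + tns n • φ)‖ ≤ (Ninv - cρ) * (C * tns n^2) := by
        have heq : (Ninv - cρ) * (C * tns n^2) = KG * ‖φ‖^2 * tns n^2 := by
          rw [hC]; field_simp
        rw [heq]; exact hGv
      obtain ⟨w, hGw, hwv⟩ := existsW (u₀ + tns n • φ) (C * tns n^2) hεnn hsub hGv2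
      exact ⟨w, hGw, hwv⟩
    set un : ℕ → U := fun n =>
      if h : P n then Classical.choose h - tns n • φ else u₀ with hun
    have hun_spec : ∀ n, P n → G (un n + tns n • φ) = 0 ∧ ‖un n - u₀‖ ≤ C * tns n^2 := by
      intro n h
      have hsp := Classical.choose_spec h
      simp only [hun, dif_pos h]
      refine ⟨?_, ?_⟩
      · rw [sub_add_cancel]; exact hsp.1
      · have heq : Classical.choose h - tns n • φ - u₀
            = Classical.choose h - (u₀ + tns n • φ) := by abel
        rw [heq]; exact hsp.2
    have hu : Tendsto un atTop (𝓝 u₀) := by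
      rw [tendsto_iff_norm_sub_tendsto_zero]
      refine squeeze_zero' (Eventually.of_forall fun n => norm_nonneg _)
        (hex.mono fun n h => (hun_spec n h).2) ?_
      have h4 := (ht.mul ht).const_mul C
      rw [mul_zero, mul_zero] at h4
      simp only [pow_two]
      exact h4
    have hmem : limsup (fun n => (F (un n + tns n • φ) - F (un n)) / tns n) atTop
        ∈ gdSet F u₀ φ := ⟨un, tns, htp, hu, ht, rfl⟩
    have hb := eventually_bound hr hK φ htp hu ht
    have hrn : ∀ᶠ n in atTop, C * tns n ^ 2 < r := by
      have h2 : Tendsto (fun n => C * tns n ^ 2) atTop (𝓝 0) := by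
        have h4 := (ht.mul ht).const_mul C
        rw [mul_zero, mul_zero] at h4
        simp only [pow_two]
        exact h4
      exact h2.eventually_lt_const hr
    have hlow : ∀ᶠ n in atTop,
        -(K * C) * tns n ≤ (F (un n + tns n • φ) - F (un n)) / tns n := by
      filter_upwards [hex, hsmall, hrn] with n hPn hsm hrn
      obtain ⟨hGn, hclose⟩ := hun_spec n hPn
      have ht0 := htp n
      have hδle : min ρ (min α δ) ≤ δ := le_trans (min_le_right _ _) (min_le_right _ _)
      have hw : un n + tns n • φ ∈ ball u₀ δ := by
        rw [mem_ball, dist_eq_norm]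
        calc ‖un n + tns n • φ - u₀‖ ≤ ‖un n - u₀‖ + ‖tns n • φ‖ := by
              rw [add_sub_right_comm]; exact norm_add_le _ _
          _ ≤ C * tns n^2 + tns n * ‖φ‖ := by
              refine add_le_add hclose ?_
              rw [norm_smul, Real.norm_eq_abs, abs_of_pos ht0]
          _ < δ := by linarith
      have hFw : F u₀ ≤ F (un n + tns n • φ) := hmin' _ hw hGn
      have huball : un n ∈ ball u₀ r := by
        rw [mem_ball, dist_eq_norm]; exact lt_of_le_of_lt hclose hrn
      have hFu := hK u₀ (mem_ball_self hr) (un n) huball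
      have hnrm : ‖u₀ - un n‖ ≤ C * tns n^2 := by rw [norm_sub_rev]; exact hclose
      have h5 : -(K * (C * tns n^2)) ≤ F u₀ - F (un n) := by
        have h6 := (abs_le.1 hFu).1
        have h7 : K * ‖u₀ - un n‖ ≤ K * (C * tns n^2) :=
          mul_le_mul_of_nonneg_left hnrm hK0.le
        linarith
      rw [le_div_iff₀ ht0]
      calc -(K*C) * tns n * tns n = -(K * (C * tns n^2)) := by ring
        _ ≤ F u₀ - F (un n) := h5
        _ ≤ F (un n + tns n • φ) - F (un n) := by linarith
    have hlim0 : Tendsto (fun n => -(K*C) * tns n) atTop (𝓝 0) := by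
      have := ht.const_mul (-(K*C))
      rwa [mul_zero] at this
    have h0le : (0:ℝ) ≤ limsup (fun n => (F (un n + tns n • φ) - F (un n)) / tns n) atTop := by
      have hco : IsCoboundedUnder (· ≤ ·) atTop (fun n => -(K*C) * tns n) :=
        hlim0.isBoundedUnder_ge.isCoboundedUnder_le
      have hbd : IsBoundedUnder (· ≤ ·) atTop
          (fun n => (F (un n + tns n • φ) - F (un n)) / tns n) :=
        ⟨K * ‖φ‖, eventually_map.2 (hb.mono fun n h => (abs_le.1 h).2)⟩
      have := limsup_le_limsup hlow hco hbd
      rwa [hlim0.limsup_eq] at this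
    exact h0le.trans (le_H hr hK φ hmem)
  -- Hahn-Banach and factorization
  obtain ⟨g, hg0, hgle⟩ := exists_extension_of_le_sublinear
    ((0 : U →ₗ[ℝ] ℝ).toPMap (LinearMap.ker (M : U →ₗ[ℝ] Z))) (genDirDeriv F u₀)
    (fun c hc x => H_smul hr hK hc x) (fun x y => H_add hr hK x y)
    (fun x => by
      show (0 : U →ₗ[ℝ] ℝ) x.1 ≤ _
      rw [LinearMap.zero_apply]
      exact key x.1 (LinearMap.mem_ker.1 x.2))
  have gnorm : ∀ x, ‖g x‖ ≤ K * ‖x‖ := by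
    intro x
    rw [Real.norm_eq_abs, abs_le]
    constructor
    · have h1 := (hgle (-x)).trans (H_le_norm hr hK (-x))
      rw [map_neg, norm_neg] at h1
      linarith
    · exact (hgle x).trans (H_le_norm hr hK x)
  set ustar : U →L[ℝ] ℝ := g.mkContinuous K gnorm with hustar
  have hust : ∀ φ, ustar φ = g φ := fun φ => rfl
  have gker : ∀ u : U, M u = 0 → g u = 0 := by
    intro u hu
    have := hg0 ⟨u, LinearMap.mem_ker.2 hu⟩
    change g u = (0 : U →ₗ[ℝ] ℝ) u at this
    rwa [LinearMap.zero_apply] at this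
  set s : Z → U := Function.surjInv hsurj with hsdef
  have hs : ∀ z, M (s z) = z := Function.surjInv_eq hsurj
  have hgfac : ∀ (u : U) (z : Z), M u = z → g u = g (s z) := by
    intro u z hu
    have h1 : M (s z - u) = 0 := by rw [map_sub, hs, hu, sub_self]
    have h2 := gker _ h1
    rw [map_sub] at h2
    linarith
  set h : Z →ₗ[ℝ] ℝ :=
    { toFun := fun z => - g (s z)
      map_add' := by
        intro z₁ z₂
        have := hgfac (s z₁ + s z₂) (z₁ + z₂) (by rw [map_add, hs, hs])
        rw [map_add] at this
        linarith
      map_smul' := by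
        intro a z
        have := hgfac (a • s z) (a • z) (by rw [map_smul, hs])
        rw [map_smul] at this
        simp only [RingHom.id_apply, smul_eq_mul]
        rw [smul_eq_mul] at this
        linarith } with hh
  have hcomp : ∀ u : U, h (M u) = - g u := by
    intro u
    have := hgfac u (M u) rfl
    simp only [hh, LinearMap.coe_mk, AddHom.coe_mk]
    linarith
  have hbound : ∀ z, ‖h z‖ ≤ K * (fsym.nnnorm : ℝ) * ‖z‖ := by
    intro z
    have h1 : h z = - g (fsym z) := by
      have := hcomp (fsym z)
      rwa [fsym.right_inv] at this
    rw [h1, norm_neg]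
    calc ‖g (fsym z)‖ ≤ K * ‖fsym z‖ := gnorm _
      _ ≤ K * ((fsym.nnnorm : ℝ) * ‖z‖) :=
          mul_le_mul_of_nonneg_left (fsym.bound z) hK0.le
      _ = K * (fsym.nnnorm : ℝ) * ‖z‖ := by ring
  set z₀star : Z →L[ℝ] ℝ := h.mkContinuous _ hbound with hz₀
  have hzapp : ∀ z, z₀star z = h z := fun z => rfl
  refine ⟨ustar, fun φ => (hust φ).le.trans (hgle φ), z₀star, ?_, ?_⟩
  · ext φ
    simp only [ContinuousLinearMap.add_apply, ContinuousLinearMap.comp_apply,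
      ContinuousLinearMap.zero_apply]
    rw [hust, hzapp, hcomp]
    ring
  · intro φ
    rw [hust, hzapp, hcomp]
    ring
end

section
/- Under the hypotheses of the non-smooth Lagrange multiplier theorem with equality and inequality constraints (U, Z₁, Z₂ Banach spaces; C ⊂ Z₂ a convex cone with nonempty interior inducing the order z ≤ 0 ⇔ z ∈ −C, z < 0 ⇔ z ∈ int(−C), satisfying: z₁ ≤ 0 and z₂ < 0 imply z₁ + z₂ < 0; F : U → ℝ locally Lipschitz at u₀; G₁ : U → Z₁, G₂ : U → Z₂ Fréchet differentiable; G₁(u₀) = 0, G₂(u₀) ≤ 0; u₀ a local minimum of F subject to G₁(u) = 0 and G₂(u) ≤ 0; G₁'(u₀) onto; ‖G₁'(u₀+φ) − G₁'(u₀)‖ ≤ K‖φ‖ for ‖φ‖ < α; and there exists φ₀ ∈ U with G₁'(u₀)φ₀ = 0 and G₂'(u₀)φ₀ < 0), and additionally assuming the existence, for each direction φ_α in the kernel of G₁'(u₀), of corrections ψ₀^α(t) uniformly bounded by K₁ with G₁(u₀ + tφ_α + t²ψ₀^α(t)) = 0 for |t| < ε: for every φ ∈ U such that G₁'(u₀)φ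 = 0 and G₂'(u₀)φ = v − λG₂(u₀) for some v ∈ −C and λ ≥ 0, one has H_{u₀}(φ) ≥ 0. -/
open Filter Topology Metric

section aux
variable {Z : Type*} [NormedAddCommGroup Z] [NormedSpace ℝ Z]

lemma negC_add {C : Set Z} (hconv : Convex ℝ C)
    (hsmul : ∀ c ∈ C, ∀ t : ℝ, 0 ≤ t → t • c ∈ C)
    {a b : Z} (ha : a ∈ -C) (hb : b ∈ -C) : a + b ∈ -C := by
  rw [Set.mem_neg] at ha hb ⊢
  have hmid : (1/2 : ℝ) • (-a) + (1/2 : ℝ) • (-b) ∈ C :=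
    hconv ha hb (by norm_num) (by norm_num) (by norm_num)
  have h2 := hsmul _ hmid 2 (by norm_num)
  have heq : (2:ℝ) • ((1/2 : ℝ) • (-a) + (1/2 : ℝ) • (-b)) = -(a+b) := by
    module
  rwa [heq] at h2

lemma negC_smul {C : Set Z} (hsmul : ∀ c ∈ C, ∀ t : ℝ, 0 ≤ t → t • c ∈ C)
    {a : Z} {t : ℝ} (ht : 0 ≤ t) (ha : a ∈ -C) : t • a ∈ -C := by
  rw [Set.mem_neg] at ha ⊢
  rw [← smul_neg]
  exact hsmul _ ha t ht

lemma int_negC_smul {C : Set Z} (hsmul : ∀ c ∈ C, ∀ t : ℝ, 0 ≤ t → t • c ∈ C)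
    {a : Z} {t : ℝ} (ht : 0 < t) (ha : a ∈ interior (-C)) :
    t • a ∈ interior (-C) := by
  have hsub : (fun x : Z => t • x) '' interior (-C) ⊆ -C := by
    rintro y ⟨x, hx, rfl⟩
    exact negC_smul hsmul ht.le (interior_subset hx)
  have hopen : IsOpen ((fun x : Z => t • x) '' interior (-C)) := by
    have := isOpen_interior (s := -C) |>.smul₀ (G₀ := ℝ) ht.ne'
    simpa [Set.image_smul] using this
  exact interior_maximal hsub hopen ⟨a, ha, rfl⟩

end aux

set_option maxHeartbeats 1600000 in
/-- under the hypotheses of the non-smooth Lagrange multiplier theorem with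
equality and inequality constraints, together with the existence of uniformly bounded
corrections along kernel directions of `G₁'(u₀)`, one has `H_{u₀}(φ) ≥ 0` for every `φ`
with `G₁'(u₀) φ = 0` and `G₂'(u₀) φ = v - λ G₂(u₀)`, `v ≤ 0`, `λ ≥ 0`. -/
theorem genDirDeriv_nonneg_of_localMin_eq_ineq_constraints
    {U : Type*} [NormedAddCommGroup U] [NormedSpace ℝ U] [CompleteSpace U]
    {Z₁ : Type*} [NormedAddCommGroup Z₁] [NormedSpace ℝ Z₁] [CompleteSpace Z₁]
    {Z₂ : Type*} [NormedAddCommGroup Z₂] [NormedSpace ℝ Z₂] [CompleteSpace Z₂]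
    -- the cone `C ⊂ Z₂`: convex, closed under nonnegative scalar multiplication,
    -- with nonempty interior
    (C : Set Z₂) (hC_conv : Convex ℝ C)
    (hC_smul : ∀ c ∈ C, ∀ t : ℝ, 0 ≤ t → t • c ∈ C)
    (hC_int : (interior C).Nonempty)
    -- order property: `z₁ ≤ 0` and `z₂ < 0` imply `z₁ + z₂ < 0`
    (hC_order : ∀ z₁ z₂ : Z₂, z₁ ∈ -C → z₂ ∈ interior (-C) → z₁ + z₂ ∈ interior (-C))
    (F : U → ℝ) (u₀ : U) (hF : LocallyLipschitzAtPt F u₀)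
    (G₁ : U → Z₁) (G₁' : U → U →L[ℝ] Z₁) (hG₁ : ∀ u : U, HasFDerivAt G₁ (G₁' u) u)
    (G₂ : U → Z₂) (G₂' : U → U →L[ℝ] Z₂) (hG₂ : ∀ u : U, HasFDerivAt G₂ (G₂' u) u)
    (hG₁0 : G₁ u₀ = 0) (hG₂0 : G₂ u₀ ∈ -C)
    -- `u₀` is a local minimum of `F` subject to `G₁ u = 0`, `G₂ u ≤ 0`
    (hmin : ∃ δ > (0 : ℝ), ∀ u ∈ ball u₀ δ, G₁ u = 0 → G₂ u ∈ -C → F u₀ ≤ F u)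
    (hsurj : Function.Surjective (G₁' u₀))
    (hLip : ∃ α > (0 : ℝ), ∃ K > (0 : ℝ),
      ∀ φ : U, ‖φ‖ < α → ‖G₁' (u₀ + φ) - G₁' u₀‖ ≤ K * ‖φ‖)
    -- Slater-type condition
    (hslater : ∃ φ₀ : U, G₁' u₀ φ₀ = 0 ∧ G₂' u₀ φ₀ ∈ interior (-C))
    -- corrections `ψ₀^α(t)`, uniformly bounded, restoring the equality constraint
    (hcorr : ∃ ε > (0 : ℝ), ∃ K₁ > (0 : ℝ), ∀ φα : U, G₁' u₀ φα = 0 →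
      ∃ ψ : ℝ → U, ∀ t : ℝ, |t| < ε →
        ‖ψ t‖ ≤ K₁ ∧ G₁ (u₀ + t • φα + t ^ 2 • ψ t) = 0) :
    ∀ (φ : U) (v : Z₂) (lam : ℝ), G₁' u₀ φ = 0 → v ∈ -C → 0 ≤ lam →
      G₂' u₀ φ = v - lam • G₂ u₀ → 0 ≤ genDirDeriv F u₀ φ := by
  obtain ⟨r, hr, K, hK, hKlip⟩ := hF
  obtain ⟨δ, hδ, hδmin⟩ := hmin
  obtain ⟨ε, hε, K₁, hK₁, hψex⟩ := hcorr
  obtain ⟨φ₀, hφ₀1, hφ₀2⟩ := hslater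
  intro φ v lam hφker hv hlam heq
  rw [genDirDeriv]
  set S := { L : ℝ | ∃ (un : ℕ → U) (tn : ℕ → ℝ),
    (∀ n, 0 < tn n) ∧
    Tendsto un atTop (𝓝 u₀) ∧ Tendsto tn atTop (𝓝 0) ∧
    L = limsup (fun n => (F (un n + tn n • φ) - F (un n)) / tn n) atTop } with hSdef
  -- any admissible sequence pair eventually has quotient bounded by K‖φ‖ in absolute value
  have hball : ∀ (un : ℕ → U) (tn : ℕ → ℝ), (∀ n, 0 < tn n) →
      Tendsto un atTop (𝓝 u₀) → Tendsto tn atTop (𝓝 0) →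
      ∀ᶠ n in atTop, |(F (un n + tn n • φ) - F (un n)) / tn n| ≤ K * ‖φ‖ := by
    intro un tn htn hun htn0
    have h1 : ∀ᶠ n in atTop, un n ∈ ball u₀ (r/2) :=
      hun (ball_mem_nhds u₀ (by positivity))
    have h2 : ∀ᶠ n in atTop, |tn n| < r / (2 * (‖φ‖ + 1)) := by
      have : ∀ᶠ n in atTop, dist (tn n) 0 < r / (2 * (‖φ‖ + 1)) :=
        Metric.tendsto_nhds.mp htn0 _ (by positivity)
      simpa [Real.dist_eq] using this
    filter_upwards [h1, h2] with n hn1 hn2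
    have hφ1 : (0:ℝ) < ‖φ‖ + 1 := by positivity
    have htnpos := htn n
    have hmem1 : un n ∈ ball u₀ r := by
      have := mem_ball.mp hn1; exact mem_ball.mpr (lt_of_lt_of_le this (by linarith))
    have hmem2 : un n + tn n • φ ∈ ball u₀ r := by
      rw [mem_ball, dist_eq_norm]
      have htri : ‖un n + tn n • φ - u₀‖ ≤ ‖un n - u₀‖ + ‖tn n • φ‖ := by
        have h0 : un n + tn n • φ - u₀ = (un n - u₀) + tn n • φ := by abel
        rw [h0]; exact norm_add_le _ _
      have hb1 : ‖un n - u₀‖ < r/2 := by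
        have := mem_ball.mp hn1; rwa [dist_eq_norm] at this
      have hb2 : ‖tn n • φ‖ < r/2 := by
        rw [norm_smul, Real.norm_eq_abs]
        calc |tn n| * ‖φ‖ ≤ |tn n| * (‖φ‖ + 1) := by
              exact mul_le_mul_of_nonneg_left (by linarith) (abs_nonneg _)
          _ < (r / (2 * (‖φ‖ + 1))) * (‖φ‖ + 1) := by
              exact mul_lt_mul_of_pos_right hn2 hφ1
          _ = r/2 := by field_simp
      linarith
    have hlipv := hKlip _ hmem2 _ hmem1
    have hsimp : un n + tn n • φ - un n = tn n • φ := by abel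
    rw [hsimp, norm_smul, Real.norm_eq_abs, abs_of_pos htnpos] at hlipv
    rw [abs_div, abs_of_pos htnpos, div_le_iff₀ htnpos]
    calc |F (un n + tn n • φ) - F (un n)| ≤ K * (tn n * ‖φ‖) := hlipv
      _ = K * ‖φ‖ * tn n := by ring
  have hbdd : BddAbove S := by
    refine ⟨K * ‖φ‖, ?_⟩
    rintro L ⟨un, tn, htn, hun, htn0, rfl⟩
    have hb := hball un tn htn hun htn0
    refine limsup_le_of_le ?_ ?_
    · exact isCoboundedUnder_le_of_eventually_le atTop
        (x := -(K * ‖φ‖)) (by filter_upwards [hb] with n hn; linarith [abs_le.mp hn])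
    · filter_upwards [hb] with n hn; exact (abs_le.mp hn).2
  have key : ∀ σ : ℝ, 0 < σ → -(K * σ * ‖φ₀‖) ≤ sSup S := by
    intro σ hσ
    obtain ⟨w₀, hw₀⟩ : ∃ w, w = G₂' u₀ φ₀ := ⟨_, rfl⟩
    have hw₀int : w₀ ∈ interior (-C) := hw₀ ▸ hφ₀2
    obtain ⟨χ, hχ⟩ : ∃ c, c = φ + σ • φ₀ := ⟨_, rfl⟩
    have hχker : G₁' u₀ χ = 0 := by
      rw [hχ, map_add, map_smul, hφker, hφ₀1, smul_zero, add_zero]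
    obtain ⟨ψ, hψ⟩ := hψex χ hχker
    obtain ⟨a, ha_def⟩ : ∃ a : ℝ, a = min ε 1 / 2 := ⟨_, rfl⟩
    have ha : 0 < a := by rw [ha_def]; have := lt_min hε one_pos; positivity
    have haε : a < ε := by
      have h1 : a ≤ ε / 2 := by rw [ha_def]; gcongr; exact min_le_left _ _
      linarith
    have ha1 : a ≤ 1 := by
      have h1 : a ≤ 1 / 2 := by rw [ha_def]; gcongr; exact min_le_right _ _
      linarith
    obtain ⟨t, ht_def⟩ : ∃ t : ℕ → ℝ, t = fun n : ℕ => a * (1 / ((n : ℝ) + 1)) := ⟨_, rfl⟩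
    have ht0 : ∀ n, 0 < t n := by intro n; simp only [ht_def]; positivity
    have hta : ∀ n, t n ≤ a := by
      intro n
      simp only [ht_def]
      have h1 : (1:ℝ) / ((n:ℝ) + 1) ≤ 1 := by
        rw [div_le_one (by positivity)]; exact le_add_of_nonneg_left (Nat.cast_nonneg n)
      nlinarith
    have ht1 : ∀ n, t n ≤ 1 := fun n => (hta n).trans ha1
    have htlim : Tendsto t atTop (𝓝 0) := by
      rw [ht_def]
      have h := tendsto_one_div_add_atTop_nhds_zero_nat.const_mul a
      rw [mul_zero] at h
      exact h
    have hψn : ∀ n, ‖ψ (t n)‖ ≤ K₁ ∧ G₁ (u₀ + t n • χ + (t n) ^ 2 • ψ (t n)) = 0 := by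
      intro n
      exact hψ (t n) (by rw [abs_of_pos (ht0 n)]; exact lt_of_le_of_lt (hta n) haε)
    obtain ⟨hs, hs_def⟩ : ∃ h : ℕ → U, h = fun n => t n • χ + (t n) ^ 2 • ψ (t n) := ⟨_, rfl⟩
    obtain ⟨un, hun_def⟩ : ∃ u : ℕ → U, u = fun n => u₀ + (t n) ^ 2 • ψ (t n) := ⟨_, rfl⟩
    obtain ⟨p, hp_def⟩ : ∃ p : ℕ → U, p = fun n => u₀ + hs n := ⟨_, rfl⟩
    have hsn : ∀ n, hs n = t n • χ + (t n) ^ 2 • ψ (t n) := fun n => by rw [hs_def]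
    have hunn : ∀ n, un n = u₀ + (t n) ^ 2 • ψ (t n) := fun n => by rw [hun_def]
    have hpn : ∀ n, p n = u₀ + hs n := fun n => by rw [hp_def]
    have hp_eq : ∀ n, p n = un n + t n • χ := by
      intro n; rw [hpn, hsn, hunn]; abel
    have hG1p : ∀ n, G₁ (p n) = 0 := by
      intro n
      have h0 : p n = u₀ + t n • χ + (t n) ^ 2 • ψ (t n) := by
        rw [hpn, hsn]; abel
      rw [h0]; exact (hψn n).2
    -- tendsto facts
    have hsq : Tendsto (fun n => (t n) ^ 2 • ψ (t n)) atTop (𝓝 (0:U)) := by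
      have hb : ∀ n, ‖(t n) ^ 2 • ψ (t n)‖ ≤ (t n) ^ 2 * K₁ := by
        intro n
        rw [norm_smul, Real.norm_eq_abs, abs_of_pos (pow_pos (ht0 n) 2)]
        exact mul_le_mul_of_nonneg_left (hψn n).1 (by positivity)
      have hg : Tendsto (fun n => (t n) ^ 2 * K₁) atTop (𝓝 0) := by
        have h2 := htlim.pow 2
        rw [show (0:ℝ)^2 = 0 by norm_num] at h2
        have h3 := h2.mul_const K₁
        rw [zero_mul] at h3
        exact h3
      exact squeeze_zero_norm hb hg
    have hslim : Tendsto hs atTop (𝓝 (0:U)) := by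
      rw [hs_def]
      have h1 := htlim.smul_const χ
      rw [zero_smul] at h1
      have h2 := h1.add hsq
      rw [add_zero] at h2
      exact h2
    have hunlim : Tendsto un atTop (𝓝 u₀) := by
      rw [hun_def]
      have h := (tendsto_const_nhds (x := u₀) (f := atTop)).add hsq
      rw [add_zero] at h
      exact h
    have hplim : Tendsto p atTop (𝓝 u₀) := by
      rw [hp_def]
      have h := (tendsto_const_nhds (x := u₀) (f := atTop)).add hslim
      rw [add_zero] at h
      exact h
    -- the error term
    obtain ⟨e, he_def⟩ : ∃ e : ℕ → Z₂, e = fun n =>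
        (t n)⁻¹ • (G₂ (u₀ + hs n) - G₂ u₀ - G₂' u₀ (hs n)) + t n • G₂' u₀ (ψ (t n)) := ⟨_, rfl⟩
    have hen : ∀ n, e n = (t n)⁻¹ • (G₂ (u₀ + hs n) - G₂ u₀ - G₂' u₀ (hs n))
        + t n • G₂' u₀ (ψ (t n)) := fun n => by rw [he_def]
    have hsnorm : ∀ n, ‖hs n‖ ≤ t n * (‖χ‖ + K₁) := by
      intro n
      calc ‖hs n‖ ≤ ‖t n • χ‖ + ‖(t n) ^ 2 • ψ (t n)‖ := by
            rw [hsn]; exact norm_add_le _ _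
        _ = t n * ‖χ‖ + (t n)^2 * ‖ψ (t n)‖ := by
            rw [norm_smul, norm_smul, Real.norm_eq_abs, Real.norm_eq_abs,
              abs_of_pos (ht0 n), abs_of_pos (pow_pos (ht0 n) 2)]
        _ ≤ t n * ‖χ‖ + t n * K₁ := by
            have h1 : (t n)^2 * ‖ψ (t n)‖ ≤ (t n)^2 * K₁ :=
              mul_le_mul_of_nonneg_left (hψn n).1 (by positivity)
            have h2 : (t n)^2 * K₁ ≤ t n * K₁ := by
              have : (t n)^2 ≤ t n := by nlinarith [ht0 n, ht1 n]
              exact mul_le_mul_of_nonneg_right this hK₁.le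
            linarith
        _ = t n * (‖χ‖ + K₁) := by ring
    have helim : Tendsto e atTop (𝓝 (0:Z₂)) := by
      have hpart2 : Tendsto (fun n => t n • G₂' u₀ (ψ (t n))) atTop (𝓝 (0:Z₂)) := by
        have hb : ∀ n, ‖t n • G₂' u₀ (ψ (t n))‖ ≤ t n * (‖G₂' u₀‖ * K₁) := by
          intro n
          rw [norm_smul, Real.norm_eq_abs, abs_of_pos (ht0 n)]
          refine mul_le_mul_of_nonneg_left ?_ (ht0 n).le
          calc ‖G₂' u₀ (ψ (t n))‖ ≤ ‖G₂' u₀‖ * ‖ψ (t n)‖ := (G₂' u₀).le_opNorm _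
            _ ≤ ‖G₂' u₀‖ * K₁ := mul_le_mul_of_nonneg_left (hψn n).1 (norm_nonneg _)
        have hg := htlim.mul_const (‖G₂' u₀‖ * K₁)
        rw [zero_mul] at hg
        exact squeeze_zero_norm hb hg
      have hpart1 : Tendsto
          (fun n => (t n)⁻¹ • (G₂ (u₀ + hs n) - G₂ u₀ - G₂' u₀ (hs n))) atTop (𝓝 (0:Z₂)) := by
        rw [NormedAddCommGroup.tendsto_nhds_zero]
        intro η hη
        have hB0 : (0:ℝ) ≤ ‖χ‖ + K₁ := by positivity
        have hc : (0:ℝ) < η / (‖χ‖ + K₁ + 1) := by positivity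
        have hlo := hasFDerivAt_iff_isLittleO_nhds_zero.mp (hG₂ u₀)
        have hev := hslim.eventually ((Asymptotics.isLittleO_iff.mp hlo) hc)
        filter_upwards [hev] with n hn
        have htn := ht0 n
        have hnorm : ‖(t n)⁻¹ • (G₂ (u₀ + hs n) - G₂ u₀ - G₂' u₀ (hs n))‖
            = (t n)⁻¹ * ‖G₂ (u₀ + hs n) - G₂ u₀ - G₂' u₀ (hs n)‖ := by
          rw [norm_smul, Real.norm_eq_abs, abs_of_pos (by positivity)]
        rw [hnorm]
        have hb : ‖G₂ (u₀ + hs n) - G₂ u₀ - G₂' u₀ (hs n)‖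
            ≤ (η / (‖χ‖ + K₁ + 1)) * ‖hs n‖ := hn
        have hb2 : (η / (‖χ‖ + K₁ + 1)) * ‖hs n‖
            ≤ (η / (‖χ‖ + K₁ + 1)) * (t n * (‖χ‖ + K₁)) :=
          mul_le_mul_of_nonneg_left (hsnorm n) hc.le
        have hbound : (t n)⁻¹ * ‖G₂ (u₀ + hs n) - G₂ u₀ - G₂' u₀ (hs n)‖
            ≤ (η / (‖χ‖ + K₁ + 1)) * (‖χ‖ + K₁) := by
          rw [inv_mul_le_iff₀ htn]
          calc ‖G₂ (u₀ + hs n) - G₂ u₀ - G₂' u₀ (hs n)‖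
              ≤ (η / (‖χ‖ + K₁ + 1)) * (t n * (‖χ‖ + K₁)) := hb.trans hb2
            _ = t n * (η / (‖χ‖ + K₁ + 1) * (‖χ‖ + K₁)) := by ring
        have hfin : (η / (‖χ‖ + K₁ + 1)) * (‖χ‖ + K₁) < η := by
          rw [div_mul_eq_mul_div, div_lt_iff₀ (by positivity)]
          nlinarith
        linarith
      rw [he_def]
      have h := hpart1.add hpart2
      rw [add_zero] at h
      exact h
    -- decomposition of G₂ (p n)
    have hdecomp : ∀ n, G₂ (p n) =
        ((1 - lam * t n) • G₂ u₀ + t n • v) + t n • (σ • w₀ + e n) := by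
      intro n
      have htn : t n ≠ 0 := (ht0 n).ne'
      have hchi : G₂' u₀ χ = (v - lam • G₂ u₀) + σ • w₀ := by
        rw [hχ, map_add, map_smul, heq, hw₀]
      have hder : G₂' u₀ (hs n) = t n • ((v - lam • G₂ u₀) + σ • w₀)
          + (t n) ^ 2 • G₂' u₀ (ψ (t n)) := by
        rw [hsn, map_add, map_smul, map_smul, hchi]
      have hte : t n • e n = (G₂ (u₀ + hs n) - G₂ u₀ - G₂' u₀ (hs n))
          + (t n) ^ 2 • G₂' u₀ (ψ (t n)) := by
        rw [hen, smul_add, smul_smul, smul_smul, mul_inv_cancel₀ htn, one_smul, ← pow_two]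
      have hexpand : t n • (σ • w₀ + e n) = t n • σ • w₀
          + ((G₂ (u₀ + hs n) - G₂ u₀ - G₂' u₀ (hs n)) + (t n) ^ 2 • G₂' u₀ (ψ (t n))) := by
        rw [smul_add, hte]
      rw [hpn, hexpand, hder]
      module
    -- feasibility
    have hint : σ • w₀ ∈ interior (-C) := int_negC_smul hC_smul hσ hw₀int
    have hevint : ∀ᶠ n in atTop, σ • w₀ + e n ∈ interior (-C) := by
      have h1 := (tendsto_const_nhds (x := σ • w₀) (f := atTop)).add helim
      rw [add_zero] at h1
      exact h1.eventually (isOpen_interior.eventually_mem hint)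
    have hevlam : ∀ᶠ n in atTop, lam * t n ≤ 1 := by
      have h1 := htlim.const_mul lam
      rw [mul_zero] at h1
      filter_upwards [h1.eventually_lt_const one_pos] with n hn using hn.le
    have hfeas : ∀ᶠ n in atTop, G₂ (p n) ∈ -C := by
      filter_upwards [hevint, hevlam] with n h1 h2
      rw [hdecomp n]
      have m1 : (1 - lam * t n) • G₂ u₀ ∈ -C := negC_smul hC_smul (by linarith) hG₂0
      have m2 : t n • v ∈ -C := negC_smul hC_smul (ht0 n).le hv
      have m3 : t n • (σ • w₀ + e n) ∈ interior (-C) := int_negC_smul hC_smul (ht0 n) h1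
      exact interior_subset (hC_order _ _ (negC_add hC_conv hC_smul m1 m2) m3)
    have hFp : ∀ᶠ n in atTop, F u₀ ≤ F (p n) := by
      filter_upwards [hplim (ball_mem_nhds u₀ hδ), hfeas] with n h1 h2
      exact hδmin _ h1 (hG1p n) h2
    -- Lipschitz lower bound for the quotient
    have hlow : ∀ᶠ n in atTop,
        -(K * K₁ * t n) - K * σ * ‖φ₀‖ ≤ (F (un n + t n • φ) - F (un n)) / t n := by
      have hball_r := ball_mem_nhds u₀ hr
      have e1 : ∀ᶠ n in atTop, un n ∈ ball u₀ r := hunlim hball_r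
      have e2 : ∀ᶠ n in atTop, un n + t n • φ ∈ ball u₀ r := by
        have h := hunlim.add (htlim.smul_const φ)
        rw [zero_smul, add_zero] at h
        exact h hball_r
      have e3 : ∀ᶠ n in atTop, p n ∈ ball u₀ r := hplim hball_r
      filter_upwards [e1, e2, e3, hFp] with n h1 h2 h3 h4
      have htn := ht0 n
      have key1 : F (p n) - K * (t n * (σ * ‖φ₀‖)) ≤ F (un n + t n • φ) := by
        have hlipv := hKlip _ h3 _ h2
        have hdiff : p n - (un n + t n • φ) = (t n * σ) • φ₀ := by
          rw [hp_eq n, hχ, smul_add, smul_smul]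
          abel
        have h5 := (abs_le.mp hlipv).2
        rw [hdiff, norm_smul, Real.norm_eq_abs, abs_of_pos (mul_pos htn hσ)] at h5
        nlinarith
      have key2 : F (un n) - K * (K₁ * (t n)^2) ≤ F u₀ := by
        have hu0ball : u₀ ∈ ball u₀ r := mem_ball_self hr
        have hlipv := hKlip _ h1 _ hu0ball
        have hdiff : un n - u₀ = (t n)^2 • ψ (t n) := by rw [hunn]; abel
        have h5 := (abs_le.mp hlipv).2
        rw [hdiff, norm_smul, Real.norm_eq_abs, abs_of_pos (pow_pos htn 2)] at h5
        have h6 : (t n)^2 * ‖ψ (t n)‖ ≤ (t n)^2 * K₁ :=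
          mul_le_mul_of_nonneg_left (hψn n).1 (by positivity)
        nlinarith
      rw [le_div_iff₀ htn]
      nlinarith
    -- conclude: limsup quot ∈ S and is ≥ -(K σ ‖φ₀‖)
    have hquotbd : IsBoundedUnder (· ≤ ·) atTop
        (fun n => (F (un n + t n • φ) - F (un n)) / t n) := by
      refine isBoundedUnder_of_eventually_le (a := K * ‖φ‖) ?_
      filter_upwards [hball un t ht0 hunlim htlim] with n hn
      exact (abs_le.mp hn).2
    have hlowlim : Tendsto (fun n => -(K * K₁ * t n) - K * σ * ‖φ₀‖) atTop
        (𝓝 (-(K * σ * ‖φ₀‖))) := by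
      have h1 := htlim.const_mul (K * K₁)
      rw [mul_zero] at h1
      have h2 := (h1.neg).sub_const (K * σ * ‖φ₀‖)
      rw [neg_zero, zero_sub] at h2
      exact h2
    have hcob : IsCoboundedUnder (· ≤ ·) atTop
        (fun n => -(K * K₁ * t n) - K * σ * ‖φ₀‖) :=
      hlowlim.isBoundedUnder_ge.isCoboundedUnder_le
    have hls : -(K * σ * ‖φ₀‖)
        ≤ limsup (fun n => (F (un n + t n • φ) - F (un n)) / t n) atTop := by
      have h1 : limsup (fun n => -(K * K₁ * t n) - K * σ * ‖φ₀‖) atTop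
          = -(K * σ * ‖φ₀‖) := hlowlim.limsup_eq
      calc -(K * σ * ‖φ₀‖) = _ := h1.symm
        _ ≤ _ := limsup_le_limsup hlow hcob hquotbd
    have hmem : limsup (fun n => (F (un n + t n • φ) - F (un n)) / t n) atTop ∈ S :=
      ⟨un, t, ht0, hunlim, htlim, rfl⟩
    exact hls.trans (le_csSup hbdd hmem)
  -- conclude 0 ≤ sSup S
  by_contra hneg
  push_neg at hneg
  have hKφ₀ : (0:ℝ) ≤ K * ‖φ₀‖ := by positivity
  have hspos : 0 < -sSup S := by linarith
  have hσpos : 0 < -sSup S / (2 * (K * ‖φ₀‖ + 1)) := by positivity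
  have hk := key _ hσpos
  have hcalc : K * (-sSup S / (2 * (K * ‖φ₀‖ + 1))) * ‖φ₀‖ ≤ -sSup S / 2 := by
    rw [show K * (-sSup S / (2 * (K * ‖φ₀‖ + 1))) * ‖φ₀‖
        = (K * ‖φ₀‖ * -sSup S) / (2 * (K * ‖φ₀‖ + 1)) by ring]
    rw [div_le_div_iff₀ (by positivity) two_pos]
    nlinarith
  linarith
end

section
/- Let U, Z₁, Z₂ be Banach spaces, let C ⊂ Z₂ be a convex cone with nonempty interior, let H : U → ℝ be a sublinear functional, let A₁ : U → Z₁ be a bounded linear operator that is onto, let A₂ : U → Z₂ be a bounded linear operator, and let g ∈ −C. Suppose there exists φ₀ ∈ U with A₁φ₀ = 0 and A₂φ₀ ∈ int(−C), and suppose (β, z₁*, z₂*) ∈ ℝ × Z₁* × Z₂* with (β, z₁*, z₂*) ≠ (0, 0, 0) satisfies β(H(φ) + r) + ⟨A₁φ, z₁*⟩ + ⟨A₂φ − v + λg, z₂*⟩ ≥ 0 for all φ ∈ U, r ≥ 0, v ∈ −C, λ ≥ 0. Assume moreover that for every z ∈ int(−C) and every z* ∈ Z₂* with z* nonnegative on C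 and z* ≠ 0 one has ⟨z, z*⟩ < 0. Then β > 0, and (after normalizing β = 1): z₂* is nonnegative on C, ⟨g, z₂*⟩ = 0, and H(φ) + ⟨A₁φ, z₁*⟩ + ⟨A₂φ, z₂*⟩ ≥ 0 for all φ ∈ U. -/
open Filter Topology Metric

/-- separation step of the non-smooth Lagrange multiplier theorem. If the
nonzero triple `(β, z₁*, z₂*)` separates the set
`{(H(φ) + r, A₁ φ, A₂ φ - v + λ g)}` from the origin, `A₁` is onto, a Slater point `φ₀`
exists, and the cone order is strictly compatible with nonzero nonnegative functionals,
then `β > 0`, `z₂* ≥ 0` on `C`, `⟨g, z₂*⟩ = 0`, and (after normalizing `β = 1`)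
`H(φ) + ⟨A₁ φ, z₁*⟩ + ⟨A₂ φ, z₂*⟩ ≥ 0` for all `φ`. -/
theorem separation_multiplier_nondegenerate
    {U : Type*} [NormedAddCommGroup U] [NormedSpace ℝ U] [CompleteSpace U]
    {Z₁ : Type*} [NormedAddCommGroup Z₁] [NormedSpace ℝ Z₁] [CompleteSpace Z₁]
    {Z₂ : Type*} [NormedAddCommGroup Z₂] [NormedSpace ℝ Z₂] [CompleteSpace Z₂]
    -- `C` is a convex cone with nonempty interior
    (C : Set Z₂) (hC_conv : Convex ℝ C)
    (hC_smul : ∀ c ∈ C, ∀ t : ℝ, 0 ≤ t → t • c ∈ C)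
    (hC_int : (interior C).Nonempty)
    -- dual order property: `z < 0`, `z* ≥ 0` on `C`, `z* ≠ 0` imply `⟨z, z*⟩ < 0`
    (hC_dual : ∀ (z : Z₂) (zstar : Z₂ →L[ℝ] ℝ), z ∈ interior (-C) →
      (∀ c ∈ C, 0 ≤ zstar c) → zstar ≠ 0 → zstar z < 0)
    -- `H` is sublinear
    (H : U → ℝ)
    (hH_add : ∀ φ₁ φ₂ : U, H (φ₁ + φ₂) ≤ H φ₁ + H φ₂)
    (hH_smul : ∀ lam : ℝ, 0 < lam → ∀ φ : U, H (lam • φ) = lam * H φ)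
    (A₁ : U →L[ℝ] Z₁) (hA₁ : Function.Surjective A₁)
    (A₂ : U →L[ℝ] Z₂) (g : Z₂) (hg : g ∈ -C)
    -- Slater point
    (φ₀ : U) (hφ₀₁ : A₁ φ₀ = 0) (hφ₀₂ : A₂ φ₀ ∈ interior (-C))
    -- the separating triple
    (β : ℝ) (z₁star : Z₁ →L[ℝ] ℝ) (z₂star : Z₂ →L[ℝ] ℝ)
    (hne : ¬(β = 0 ∧ z₁star = 0 ∧ z₂star = 0))
    (hsep : ∀ (φ : U) (r : ℝ) (v : Z₂) (lam : ℝ), 0 ≤ r → v ∈ -C → 0 ≤ lam →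
      0 ≤ β * (H φ + r) + z₁star (A₁ φ) + z₂star (A₂ φ - v + lam • g)) :
    0 < β ∧
    (∀ c ∈ C, 0 ≤ z₂star c) ∧
    z₂star g = 0 ∧
    (β = 1 → ∀ φ : U, 0 ≤ H φ + z₁star (A₁ φ) + z₂star (A₂ φ)) := by

  obtain ⟨c₀, hc₀⟩ := hC_int
  have hc₀C : c₀ ∈ C := interior_subset hc₀
  have h0C : (0 : Z₂) ∈ C := by simpa using hC_smul c₀ hc₀C 0 le_rfl
  have h0nC : (0 : Z₂) ∈ -C := by simpa [Set.mem_neg] using h0C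
  -- z₂* ≥ 0 on C
  have hz₂ : ∀ c ∈ C, 0 ≤ z₂star c := by
    intro c hc
    by_contra hneg
    push_neg at hneg
    set t : ℝ := (|β * H 0| + 1) / (-(z₂star c)) with ht
    have hzc : 0 < -(z₂star c) := by linarith
    have htpos : 0 ≤ t := le_of_lt (div_pos (by positivity) hzc)
    have hmem : -(t • c) ∈ -C := by
      simpa [Set.mem_neg] using hC_smul c hc t htpos
    have := hsep 0 0 (-(t • c)) 0 le_rfl hmem le_rfl
    simp [map_zero, zero_smul, map_smul, smul_eq_mul] at this
    have ht' : t * (-(z₂star c)) = |β * H 0| + 1 :=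
      div_mul_cancel₀ _ (ne_of_gt hzc)
    nlinarith [le_abs_self (β * H 0), this]
  -- β ≥ 0
  have hβnn : 0 ≤ β := by
    by_contra hβ
    push_neg at hβ
    have := hsep 0 (|H 0| + 1) 0 0 (by positivity) h0nC le_rfl
    simp [map_zero, zero_smul] at this
    nlinarith [neg_abs_le (H 0), this]
  -- z₂* g = 0
  have hgC : -g ∈ C := by simpa [Set.mem_neg] using hg
  have hzg_le : z₂star g ≤ 0 := by
    have := hz₂ (-g) hgC
    simpa using this
  have hzg : z₂star g = 0 := by
    by_contra hne'
    have hlt : z₂star g < 0 := lt_of_le_of_ne hzg_le hne'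
    set t : ℝ := (|β * H 0| + 1) / (-(z₂star g)) with ht
    have hzc : 0 < -(z₂star g) := by linarith
    have htpos : 0 ≤ t := le_of_lt (div_pos (by positivity) hzc)
    have := hsep 0 0 0 t le_rfl h0nC htpos
    simp [map_zero, map_smul, smul_eq_mul] at this
    have ht' : t * (-(z₂star g)) = |β * H 0| + 1 :=
      div_mul_cancel₀ _ (ne_of_gt hzc)
    nlinarith [le_abs_self (β * H 0), this]
  -- main inequality with β
  have hmain : ∀ φ : U, 0 ≤ β * H φ + z₁star (A₁ φ) + z₂star (A₂ φ) := by
    intro φ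
    have := hsep φ 0 0 0 le_rfl h0nC le_rfl
    simpa [zero_smul] using this
  -- β > 0
  have hβpos : 0 < β := by
    rcases lt_or_eq_of_le hβnn with h | h
    · exact h
    · exfalso
      have hβ0 : β = 0 := h.symm
      have hlin : ∀ φ : U, 0 ≤ z₁star (A₁ φ) + z₂star (A₂ φ) := by
        intro φ
        have := hmain φ
        simpa [hβ0] using this
      have hz₂0 : z₂star = 0 := by
        by_contra hz2ne
        have h1 := hlin φ₀
        have h2 := hlin (-φ₀)
        simp [hφ₀₁, map_neg] at h1 h2
        have heq : z₂star (A₂ φ₀) = 0 := le_antisymm (by linarith) h1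
        have := hC_dual (A₂ φ₀) z₂star hφ₀₂ hz₂ hz2ne
        linarith
      have hz₁0 : z₁star = 0 := by
        ext z₁
        obtain ⟨φ, hφ⟩ := hA₁ z₁
        have h1 := hlin φ
        have h2 := hlin (-φ)
        simp [hφ, hz₂0, map_neg] at h1 h2
        simp [hφ]
        linarith
      exact hne ⟨hβ0, hz₁0, hz₂0⟩
  refine ⟨hβpos, hz₂, hzg, ?_⟩
  intro hβ1 φ
  have := hmain φ
  simpa [hβ1] using this
end
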